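/- Let ℓ ≤ m be positive integers and L > 0 a constant, and let F be an m-vertex graph such that c_i(u,v;F) ≤ L for every edge uv of F and every 3 ≤ i ≤ 2ℓ. Then for every 1 ≤ k ≤ ℓ-1, every vertex v of F, and every u ∈ Γ_k(v), we have |N_F(u) ∩ Γ_k(v)| ≤ Lk. -/

import Mathlib

/-- `c_k(u,v;G)`: the number of cycles of length `k` in `G` containing the edge `uv`.
Each such cycle corresponds to a unique path from `u` to `v` of length `k-1`
avoiding the edge `uv`. -/
noncomputable def cyclesThroughEdge {V : Type} (G : SimpleGraph V) (k : ℕ) (u v : V) : ℕ :=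
  Nat.card {p : G.Walk u v // p.IsPath ∧ p.length = k - 1 ∧ s(u, v) ∉ p.edges}

/-- `Γ_k(v)`: the set of vertices at distance exactly `k` from `v`. -/
def distSphere {V : Type} (G : SimpleGraph V) (k : ℕ) (v : V) : Set V :=
  {u | G.dist v u = k}

namespace StatementTenAux

open SimpleGraph Walk

variable {V : Type} [DecidableEq V] {F : SimpleGraph V}

/-- Splicing a path `R : x → v` into a path `Q : v → w`: there is a vertex `z` of `Q`
such that the part of `R` up to the first meeting point `z` followed by the rest of `Q`
is a path. -/
lemma splice {w : V} :
    ∀ {x y : V} (R : F.Walk x y), R.IsPath → ∀ (Q : F.Walk y w), Q.IsPath →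
    ∃ (z : V) (hz : z ∈ Q.support) (S : F.Walk x z) (E : F.Walk z y),
      S.length + E.length = R.length ∧ (∀ t ∈ S.support, t ∈ R.support) ∧
      (S.append (Q.dropUntil z hz)).IsPath := by
  intro x y R
  induction R with
  | nil =>
    intro _ Q hQ
    refine ⟨_, Q.start_mem_support, Walk.nil, Walk.nil, by simp, by simp, ?_⟩
    rw [Walk.nil_append]
    exact hQ.dropUntil _
  | @cons a b c h p ih =>
    intro hR Q hQ
    rw [Walk.cons_isPath_iff] at hR
    by_cases hx : a ∈ Q.support
    · refine ⟨a, hx, Walk.nil, Walk.cons h p, by simp, by simp, ?_⟩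
      rw [Walk.nil_append]
      exact hQ.dropUntil _
    · obtain ⟨z, hz, S, E, hlen, hsub, hpath⟩ := ih hR.1 Q hQ
      refine ⟨z, hz, Walk.cons h S, E, ?_, ?_, ?_⟩
      · simp only [Walk.length_cons]; omega
      · intro t ht
        simp only [Walk.support_cons, List.mem_cons] at ht ⊢
        rcases ht with rfl | ht
        · exact Or.inl rfl
        · exact Or.inr (hsub t ht)
      · rw [Walk.cons_append, Walk.cons_isPath_iff]
        refine ⟨hpath, ?_⟩
        rw [Walk.mem_support_append_iff]
        rintro (haS | haD)
        · exact hR.2 (hsub a haS)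
        · exact hx (Q.support_dropUntil_subset hz haD)

/-- A prefix of a geodesic is a geodesic. -/
lemma takeUntil_length_of_dist {v w z : V} (Q : F.Walk v w)
    (hlen : Q.length = F.dist v w) (hz : z ∈ Q.support) :
    (Q.takeUntil z hz).length = F.dist v z := by
  have h1 : F.dist v z ≤ (Q.takeUntil z hz).length := dist_le _
  have h2 : F.dist z w ≤ (Q.dropUntil z hz).length := dist_le _
  have h3 : (Q.takeUntil z hz).length + (Q.dropUntil z hz).length = Q.length := by
    rw [← Walk.length_append, Q.take_spec hz]
  have hr : F.Reachable v z := ⟨Q.takeUntil z hz⟩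
  obtain ⟨W, hW⟩ := hr.exists_walk_length_eq_dist
  have h4 : F.dist v w ≤ W.length + (Q.dropUntil z hz).length := by
    rw [← Walk.length_append]; exact dist_le _
  omega

/-- The key construction: given a geodesic from `v` to `u` of length `k` whose last edge is
`xu`, and a neighbour `w` of `u` at distance `k` from `v`, there is a path from `x` to `u` of
even length `2j` (`1 ≤ j ≤ k`) avoiding the edge `xu`, whose penultimate vertex is `w`. -/
lemma exists_cycle {k : ℕ} (hk : 1 ≤ k) {v u x : V} (hd : F.dist v u = k)
    (hxu : F.Adj u x) (R : F.Walk x v) (hR : R.IsPath) (hRlen : R.length = k - 1)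
    (huR : u ∉ R.support) {w : V} (hw : F.Adj u w) (hdw : F.dist v w = k) :
    ∃ T : F.Walk x u, T.IsPath ∧ s(x, u) ∉ T.edges ∧
      (∃ j, 1 ≤ j ∧ j ≤ k ∧ T.length = 2 * j) ∧ T.reverse.getVert 1 = w := by
  -- a geodesic from v to w
  have hrw : F.Reachable v w := Reachable.of_dist_ne_zero (by omega)
  obtain ⟨Q, hQp, hQlen⟩ := hrw.exists_path_of_dist
  rw [hdw] at hQlen
  have hQdist : Q.length = F.dist v w := by rw [hQlen, hdw]
  -- u is not on Q
  have huQ : u ∉ Q.support := by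
    intro hu
    have ht := takeUntil_length_of_dist Q hQdist hu
    rw [hd] at ht
    have h3 : (Q.takeUntil u hu).length + (Q.dropUntil u hu).length = Q.length := by
      rw [← Walk.length_append, Q.take_spec hu]
    have : (Q.dropUntil u hu).length = 0 := by omega
    exact hw.ne (Walk.eq_of_length_eq_zero this)
  -- splice R into Q
  obtain ⟨z, hz, S, E, hlen, hsub, hpath⟩ := splice R hR Q hQp
  set D := Q.dropUntil z hz with hD
  -- compute the distance from v to z
  have hdz1 : F.dist z v ≤ E.length := dist_le _
  have hdz2 : k ≤ F.dist z v + S.length + 1 := by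
    obtain ⟨W, hW⟩ := SimpleGraph.Reachable.exists_walk_length_eq_dist (⟨E⟩ : F.Reachable z v)
    have : F.dist v u ≤ ((W.reverse.append S.reverse).concat hxu.symm).length := dist_le _
    simp only [Walk.length_concat, Walk.length_append, Walk.length_reverse] at this
    omega
  have htake : (Q.takeUntil z hz).length = F.dist v z := takeUntil_length_of_dist Q hQdist hz
  have h3 : (Q.takeUntil z hz).length + D.length = Q.length := by
    rw [hD, ← Walk.length_append, Q.take_spec hz]
  have hcomm : F.dist v z = F.dist z v := SimpleGraph.dist_comm
  have hDlen : D.length = S.length + 1 := by omega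
  -- the path from x to w
  set A := S.append D with hA
  have hAlen : A.length = 2 * S.length + 1 := by
    rw [hA, Walk.length_append]; omega
  have huA : u ∉ A.support := by
    rw [hA, Walk.mem_support_append_iff]
    rintro (h | h)
    · exact huR (hsub u h)
    · exact huQ (Q.support_dropUntil_subset hz h)
  -- the path from x to u
  refine ⟨(Walk.cons hw A.reverse).reverse, ?_, ?_, ?_, ?_⟩
  · rw [Walk.isPath_reverse_iff, Walk.cons_isPath_iff, Walk.isPath_reverse_iff]
    refine ⟨hpath, ?_⟩
    rw [Walk.support_reverse, List.mem_reverse]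
    exact huA
  · rw [Walk.edges_reverse, List.mem_reverse, Walk.edges_cons, List.mem_cons]
    have hxw : x ≠ w := by
      rintro rfl
      have : F.dist v x ≤ R.length := by
        rw [SimpleGraph.dist_comm]; exact dist_le R
      omega
    rintro (he | he)
    · rw [Sym2.eq_iff] at he
      rcases he with ⟨h1, h2⟩ | ⟨h1, h2⟩
      · exact hxu.ne h1.symm
      · exact hxw h1
    · rw [Walk.edges_reverse, List.mem_reverse] at he
      exact huA (A.snd_mem_support_of_mem_edges he)
  · refine ⟨S.length + 1, by omega, by omega, ?_⟩
    rw [Walk.length_reverse, Walk.length_cons, Walk.length_reverse]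
    omega
  · rw [Walk.reverse_reverse]
    exact (Walk.getVert_cons_succ (n := 0) _ _).trans (Walk.getVert_zero _)

end StatementTenAux

/-- Let `1 ≤ ℓ ≤ m` and `L > 0`, and let `F` be an `m`-vertex graph with `c_i(u,v;F) ≤ L`
for every edge `uv` and every `3 ≤ i ≤ 2ℓ`.  Then for every `1 ≤ k ≤ ℓ - 1`, every vertex
`v` and every `u ∈ Γ_k(v)`, we have `|N_F(u) ∩ Γ_k(v)| ≤ L k`. -/
theorem statement_10 (ℓ m : ℕ) (hℓ : 1 ≤ ℓ) (hm : ℓ ≤ m) (L : ℝ) (hL : 0 < L)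
    (F : SimpleGraph (Fin m))
    (hc : ∀ u v, F.Adj u v → ∀ i, 3 ≤ i → i ≤ 2 * ℓ → (cyclesThroughEdge F i u v : ℝ) ≤ L) :
    ∀ k, 1 ≤ k → k ≤ ℓ - 1 → ∀ v u : Fin m, u ∈ distSphere F k v →
      (Nat.card ↥(F.neighborSet u ∩ distSphere F k v) : ℝ) ≤ L * k := by
  intro k hk1 hkl v u hu
  letI : DecidableRel F.Adj := Classical.decRel _
  have hu' : F.dist v u = k := hu
  -- a geodesic from v to u
  have hvu : v ≠ u ∧ F.Reachable v u :=
    SimpleGraph.dist_ne_zero_iff_ne_and_reachable.mp (by omega)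
  obtain ⟨P, hPp, hPlen⟩ := hvu.2.exists_path_of_dist
  rw [hu'] at hPlen
  -- decompose the reverse of P as an edge u-x followed by a path R from x to v
  obtain ⟨x, hxu, R, hcons⟩ := SimpleGraph.Walk.exists_eq_cons_of_ne hvu.1.symm P.reverse
  have hRrev : (SimpleGraph.Walk.cons hxu R).IsPath := by
    rw [← hcons, SimpleGraph.Walk.isPath_reverse_iff]; exact hPp
  rw [SimpleGraph.Walk.cons_isPath_iff] at hRrev
  have hRlen : R.length = k - 1 := by
    have : P.reverse.length = k := by rw [SimpleGraph.Walk.length_reverse, hPlen]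
    rw [hcons, SimpleGraph.Walk.length_cons] at this
    omega
  -- the bucket types
  set CycJ : Fin k → Type := fun j =>
    {p : F.Walk x u // p.IsPath ∧ p.length = (2 * (j : ℕ) + 3) - 1 ∧ s(x, u) ∉ p.edges}
    with hCycJ
  haveI : ∀ j : Fin k, Fintype (CycJ j) := fun j =>
    Fintype.ofInjective
      (fun p => (⟨p.1, p.2.2.1⟩ : {q : F.Walk x u // q.length = (2 * (j : ℕ) + 3) - 1}))
      (by intro a b hab
          apply Subtype.ext
          simpa using congrArg Subtype.val hab)
  -- the injection
  have key : ∀ y : ↥(F.neighborSet u ∩ distSphere F k v),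
      ∃ c : Σ j : Fin k, CycJ j, (c.2 : F.Walk x u).reverse.getVert 1 = (y : Fin m) := by
    rintro ⟨w, hw⟩
    obtain ⟨hw1, hw2⟩ := hw
    obtain ⟨T, hT1, hT2, ⟨j, hj1, hj2, hj3⟩, hT4⟩ :=
      StatementTenAux.exists_cycle hk1 hu' hxu R hRrev.1 hRlen hRrev.2 hw1 hw2
    refine ⟨⟨⟨j - 1, by omega⟩, ⟨T, hT1, by simp only; omega, hT2⟩⟩, hT4⟩
  choose f hf using key
  have hinj : Function.Injective f := by
    intro a b hab
    apply Subtype.ext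
    rw [← hf a, ← hf b, hab]
  have hcard : Nat.card ↥(F.neighborSet u ∩ distSphere F k v) ≤
      Nat.card (Σ j : Fin k, CycJ j) :=
    Nat.card_le_card_of_injective f hinj
  have hsig : Nat.card (Σ j : Fin k, CycJ j) = ∑ j : Fin k, Nat.card (CycJ j) := by
    rw [Nat.card_eq_fintype_card, Fintype.card_sigma]
    exact Finset.sum_congr rfl fun j _ => (Nat.card_eq_fintype_card).symm
  have hCyc : ∀ j : Fin k, Nat.card (CycJ j) = cyclesThroughEdge F (2 * (j : ℕ) + 3) x u :=
    fun j => rfl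
  calc (Nat.card ↥(F.neighborSet u ∩ distSphere F k v) : ℝ)
      ≤ (Nat.card (Σ j : Fin k, CycJ j) : ℝ) := by exact_mod_cast hcard
    _ = ∑ j : Fin k, (cyclesThroughEdge F (2 * (j : ℕ) + 3) x u : ℝ) := by
        rw [hsig]
        push_cast
        exact Finset.sum_congr rfl fun j _ => by rw [hCyc]
    _ ≤ ∑ _j : Fin k, L := by
        refine Finset.sum_le_sum fun j _ => ?_
        refine hc x u hxu.symm _ (by omega) ?_
        have := j.isLt
        omega
    _ = L * k := by simp [mul_comm]
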